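/- arXiv:0708.2699 — 4 statements merged into one kernel-verified Lean document; each statement's English description precedes it below -/
import Mathlib

section
/- If q > 1, m and n are positive integers with gcd(mn, q) = 1, then the sum over primitive Dirichlet characters χ mod q of χ(m)·conj(χ)(n) equals the sum over divisors d of q with d dividing (m - n) of φ(d)·μ(q/d). -/
open Complex DirichletCharacter Finset


private lemma exists_unit_decomp {q a b : ℕ} [NeZero q] (ha : a ∣ q) (hb : b ∣ q)
    (u : (ZMod q)ˣ) (hu : ZMod.unitsMap ((Nat.gcd_dvd_left a b).trans ha) u = 1) :
    ∃ x y : (ZMod q)ˣ, u = x * y ∧ ZMod.unitsMap ha x = 1 ∧ ZMod.unitsMap hb y = 1 := by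
  set g := Nat.gcd a b with hg
  set L := Nat.lcm a b with hLdef
  have hL : L ∣ q := Nat.lcm_dvd ha hb
  set U : ℕ := (u : ZMod q).val with hUdef
  have hUu : ((U : ZMod q)) = (u : ZMod q) := ZMod.natCast_zmod_val _
  have hUcop : Nat.Coprime U q := ZMod.val_coe_unit_coprime u
  have hg1 : ((U : ZMod g)) = ((1 : ℕ) : ZMod g) := by
    have := congrArg (fun w : (ZMod g)ˣ => (w : ZMod g)) hu
    simp only [ZMod.unitsMap_def, Units.coe_map, MonoidHom.coe_coe, Units.val_one] at this
    rw [← hUu] at this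
    simpa using this
  have hmod : (g : ℤ) ∣ (U : ℤ) - 1 := by
    have h1 := (ZMod.natCast_eq_natCast_iff _ _ _).mp hg1
    have h2 := (Nat.modEq_iff_dvd (n := g) (a := U) (b := 1)).mp h1
    exact (dvd_sub_comm).mp h2
  obtain ⟨t, ht⟩ := hmod
  set A := Int.gcdA a b with hA
  set B := Int.gcdB a b with hB
  have hbez : (g : ℤ) = a * A + b * B := Int.gcd_eq_gcd_ab a b
  set x : ℤ := 1 + a * A * t with hx
  have hxa : (a : ℤ) ∣ x - 1 := ⟨A * t, by rw [hx]; ring⟩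
  have hxb : (b : ℤ) ∣ x - U := ⟨-B * t, by rw [hx]; linear_combination -ht - t * hbez⟩
  have hxaC : IsCoprime x (a : ℤ) := ⟨1, -(A * t), by rw [hx]; ring⟩
  have hUb : IsCoprime (U : ℤ) (b : ℤ) := by
    have h3 : IsCoprime (U : ℤ) (q : ℤ) := Int.isCoprime_iff_gcd_eq_one.mpr (by simpa using hUcop)
    exact h3.of_isCoprime_of_dvd_right (Int.natCast_dvd_natCast.mpr hb)
  have hxbC : IsCoprime x (b : ℤ) := by
    obtain ⟨w, hw⟩ := hxb
    have hxw : x = U + (b : ℤ) * w := by linarith [hw]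
    rw [hxw]
    exact hUb.add_mul_left_left w
  have hxL : IsCoprime x (L : ℤ) := by
    have hab : IsCoprime x ((a : ℤ) * b) := hxaC.mul_right hxbC
    exact hab.of_isCoprime_of_dvd_right
      (by exact_mod_cast Int.natCast_dvd_natCast.mpr (Nat.lcm_dvd_mul a b))
  have hxunit : IsUnit ((x : ZMod L)) := by
    obtain ⟨p, s, hps⟩ := hxL
    refine IsUnit.of_mul_eq_one ((p : ℤ) : ZMod L) ?_
    have h4 := congrArg (fun z : ℤ => ((z : ZMod L))) hps
    push_cast at h4
    rw [ZMod.natCast_self, mul_zero, add_zero] at h4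
    rw [mul_comm] at h4
    exact h4
  obtain ⟨X, hX⟩ := ZMod.unitsMap_surjective hL hxunit.unit
  have hXL : (ZMod.castHom hL (ZMod L)) (X : ZMod q) = (x : ZMod L) := by
    have h5 := congrArg (fun w : (ZMod L)ˣ => (w : ZMod L)) hX
    simpa [ZMod.unitsMap_def] using h5
  have haL : a ∣ L := Nat.dvd_lcm_left a b
  have hbL : b ∣ L := Nat.dvd_lcm_right a b
  have hXa : ZMod.unitsMap ha X = 1 := by
    have hcomp : ZMod.unitsMap ha X = ZMod.unitsMap haL (ZMod.unitsMap hL X) := by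
      rw [← MonoidHom.comp_apply, ZMod.unitsMap_comp]
    apply Units.ext
    rw [hcomp]
    simp only [ZMod.unitsMap_def, Units.coe_map, MonoidHom.coe_coe, Units.val_one]
    rw [hXL]
    calc (ZMod.castHom haL (ZMod a)) ((x : ℤ) : ZMod L) = ((x : ℤ) : ZMod a) := map_intCast _ _
      _ = 1 := by
          have h0 : ((x - 1 : ℤ) : ZMod a) = 0 := (ZMod.intCast_zmod_eq_zero_iff_dvd _ _).mpr hxa
          push_cast at h0
          linear_combination h0
  have hXb : ZMod.unitsMap hb X = ZMod.unitsMap hb u := by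
    have hcomp : ZMod.unitsMap hb X = ZMod.unitsMap hbL (ZMod.unitsMap hL X) := by
      rw [← MonoidHom.comp_apply, ZMod.unitsMap_comp]
    apply Units.ext
    rw [hcomp]
    simp only [ZMod.unitsMap_def, Units.coe_map, MonoidHom.coe_coe]
    rw [hXL]
    calc (ZMod.castHom hbL (ZMod b)) ((x : ℤ) : ZMod L) = ((x : ℤ) : ZMod b) := map_intCast _ _
      _ = ((U : ℕ) : ZMod b) := by
          have h0 : ((x - U : ℤ) : ZMod b) = 0 := (ZMod.intCast_zmod_eq_zero_iff_dvd _ _).mpr hxb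
          push_cast at h0 ⊢
          linear_combination h0
      _ = (ZMod.castHom hb (ZMod b)) (u : ZMod q) := by rw [← hUu]; simp
  refine ⟨X, X⁻¹ * u, by group, hXa, ?_⟩
  rw [map_mul, map_inv, hXb, inv_mul_cancel]


private lemma factorsThrough_gcd {q : ℕ} [NeZero q] (χ : DirichletCharacter ℂ q) {a b : ℕ}
    (hfa : χ.FactorsThrough a) (hfb : χ.FactorsThrough b) :
    χ.FactorsThrough (Nat.gcd a b) := by
  have ha := hfa.dvd
  have hb := hfb.dvd
  rw [factorsThrough_iff_ker_unitsMap ((Nat.gcd_dvd_left a b).trans ha)]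
  rw [factorsThrough_iff_ker_unitsMap ha] at hfa
  rw [factorsThrough_iff_ker_unitsMap hb] at hfb
  intro u hu
  obtain ⟨x, y, rfl, hx, hy⟩ := exists_unit_decomp ha hb u hu
  rw [MonoidHom.mem_ker, map_mul]
  have h1 : χ.toUnitHom x = 1 := hfa hx
  have h2 : χ.toUnitHom y = 1 := hfb hy
  rw [h1, h2, mul_one]

private lemma conductor_changeLevel_eq {q d : ℕ} [NeZero q] (h : d ∣ q)
    (ψ : DirichletCharacter ℂ d) (hψ : ψ.IsPrimitive) :
    (changeLevel h ψ).conductor = d := by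
  have hd0 : d ≠ 0 := fun h0 => NeZero.ne q (Nat.eq_zero_of_zero_dvd (h0 ▸ h))
  haveI : NeZero d := ⟨hd0⟩
  set χ := changeLevel h ψ with hχ
  have hfd : χ.FactorsThrough d := ⟨h, ψ, rfl⟩
  have hfc : χ.FactorsThrough χ.conductor := factorsThrough_conductor χ
  have hg : χ.FactorsThrough (Nat.gcd χ.conductor d) := factorsThrough_gcd χ hfc hfd
  have hc0 : χ.conductor ≠ 0 := conductor_ne_zero (χ := χ)
  have hle : χ.conductor ≤ Nat.gcd χ.conductor d := Nat.sInf_le hg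
  have hcd : χ.conductor ∣ d := by
    have : Nat.gcd χ.conductor d = χ.conductor :=
      le_antisymm (Nat.gcd_le_left _ (Nat.pos_of_ne_zero hc0)) hle
    exact this ▸ Nat.gcd_dvd_right _ _
  -- ψ factors through χ.conductor
  have hψf : ψ.FactorsThrough χ.conductor := by
    rw [factorsThrough_iff_ker_unitsMap hcd]
    intro u hu
    obtain ⟨v, rfl⟩ := ZMod.unitsMap_surjective h u
    have hcomp := ZMod.unitsMap_comp hcd h
    have hv : ZMod.unitsMap (dvd_trans hcd h) v = 1 := by
      have h7 := congrFun (congrArg DFunLike.coe hcomp) v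
      simp only [MonoidHom.comp_apply] at h7
      rw [← h7]
      exact hu
    have hker := (factorsThrough_iff_ker_unitsMap (conductor_dvd_level χ)).mp hfc
    have hχv : χ.toUnitHom v = 1 := hker hv
    rw [MonoidHom.mem_ker]
    have : χ.toUnitHom v = ψ.toUnitHom (ZMod.unitsMap h v) := by
      rw [hχ, changeLevel_toUnitHom, MonoidHom.comp_apply]
    rw [← this, hχv]
  have h6 : ψ.conductor ≤ χ.conductor := Nat.sInf_le hψf
  rw [(isPrimitive_def ψ).mp hψ] at h6
  exact le_antisymm (Nat.le_of_dvd (Nat.pos_of_ne_zero hd0) hcd) h6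

private lemma isPrimitive_factor {q : ℕ} [NeZero q] (χ : DirichletCharacter ℂ q) {ψ : DirichletCharacter ℂ χ.conductor}
    (hχψ : χ = changeLevel (conductor_dvd_level χ) ψ) : ψ.IsPrimitive := by
  have hc0 : χ.conductor ≠ 0 := conductor_ne_zero (χ := χ)
  rw [isPrimitive_def]
  have h1 : ψ.conductor ∣ χ.conductor := conductor_dvd_level ψ
  -- χ factors through ψ.conductor
  have h2 : χ.FactorsThrough ψ.conductor := by
    obtain ⟨hd, ψ₀, hψ₀⟩ := factorsThrough_conductor ψ
    refine ⟨h1.trans (conductor_dvd_level χ), ψ₀, hχψ.trans ?_⟩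
    exact (congrArg (changeLevel (conductor_dvd_level χ)) hψ₀).trans
      (changeLevel_trans ψ₀ hd (conductor_dvd_level χ)).symm
  have h3 : χ.conductor ≤ ψ.conductor := Nat.sInf_le h2
  exact le_antisymm (Nat.le_of_dvd (Nat.pos_of_ne_zero hc0) h1) h3

-- value lemma
private lemma changeLevel_apply_natCast {d e : ℕ} [NeZero e] (hde : d ∣ e) (ψ : DirichletCharacter ℂ d) (m : ℕ)
    (hm : Nat.Coprime m e) :
    (changeLevel hde ψ) ((m : ZMod e)) = ψ ((m : ZMod d)) := by
  have ha : ((ZMod.unitOfCoprime m hm : (ZMod e)ˣ) : ZMod e) = (m : ZMod e) :=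
    ZMod.coe_unitOfCoprime m hm
  rw [← ha, changeLevel_eq_cast_of_dvd]
  congr 1
  rw [ha]
  calc (ZMod.cast ((m : ZMod e)) : ZMod d) = ZMod.castHom hde (ZMod d) ((m : ZMod e)) := rfl
    _ = (m : ZMod d) := map_natCast _ m



open Classical in
private noncomputable def Pprim (m n e : ℕ) : ℂ :=
  ∑ χ : DirichletCharacter ℂ e,
    if χ.IsPrimitive then χ ((m : ZMod e)) * (star χ) ((n : ZMod e)) else 0

private lemma sum_all_eq (e m n : ℕ) [NeZero e] (hm : Nat.Coprime m e) (hn : Nat.Coprime n e) :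
    ∑ χ : DirichletCharacter ℂ e, χ ((m : ZMod e)) * (star χ) ((n : ZMod e))
      = if (m : ZMod e) = (n : ZMod e) then (e.totient : ℂ) else 0 := by
  have hnu : IsUnit ((n : ZMod e)) := (ZMod.isUnit_iff_coprime n e).mpr hn
  have key : ∀ χ : DirichletCharacter ℂ e,
      χ ((m : ZMod e)) * (star χ) ((n : ZMod e)) = χ ((n : ZMod e))⁻¹ * χ ((m : ZMod e)) := by
    intro χ
    have h1 : χ ((n : ZMod e))⁻¹ * χ ((n : ZMod e)) = 1 := by
      rw [← map_mul, ZMod.inv_mul_of_unit _ hnu, map_one]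
    rw [MulChar.star_apply, MulChar.star_apply', MulChar.inv_apply_eq_inv',
      ← eq_inv_of_mul_eq_one_left h1, mul_comm]
  simp_rw [key]
  rw [DirichletCharacter.sum_char_inv_mul_char_eq ℂ hnu ((m : ZMod e))]
  simp [eq_comm]

private lemma split_sum (e m n : ℕ) [NeZero e] (hm : Nat.Coprime m e) (hn : Nat.Coprime n e) :
    ∑ χ : DirichletCharacter ℂ e, χ ((m : ZMod e)) * (star χ) ((n : ZMod e))
      = ∑ d ∈ e.divisors, Pprim m n d := by
  classical
  rw [← Finset.sum_fiberwise_of_maps_to (g := fun χ : DirichletCharacter ℂ e => χ.conductor)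
    (t := e.divisors) (fun χ _ => Nat.mem_divisors.mpr ⟨conductor_dvd_level χ, NeZero.ne e⟩)]
  refine Finset.sum_congr rfl (fun d hd => ?_)
  have hde : d ∣ e := (Nat.mem_divisors.mp hd).1
  have hd0 : d ≠ 0 := fun h0 => NeZero.ne e (Nat.eq_zero_of_zero_dvd (h0 ▸ hde))
  haveI : NeZero d := ⟨hd0⟩
  have hmd : Nat.Coprime m d := hm.coprime_dvd_right hde
  have hnd : Nat.Coprime n d := hn.coprime_dvd_right hde
  rw [Pprim, ← Finset.sum_filter]
  refine (Finset.sum_bij (fun (ψ : DirichletCharacter ℂ d)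
      (_ : ψ ∈ Finset.univ.filter (fun ψ : DirichletCharacter ℂ d => ψ.IsPrimitive)) =>
      changeLevel hde ψ) ?_ ?_ ?_ ?_).symm
  · intro ψ hψ
    rw [Finset.mem_filter] at hψ ⊢
    exact ⟨Finset.mem_univ _, conductor_changeLevel_eq hde ψ hψ.2⟩
  · intro ψ₁ h₁ ψ₂ h₂ hψeq
    exact changeLevel_injective hde hψeq
  · intro χ hχ
    rw [Finset.mem_filter] at hχ
    have hcond : χ.conductor = d := hχ.2
    subst hcond
    obtain ⟨hdvd, ψ, hψeq⟩ := factorsThrough_conductor χ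
    have hprim : ψ.IsPrimitive := isPrimitive_factor χ hψeq
    exact ⟨ψ, Finset.mem_filter.mpr ⟨Finset.mem_univ _, hprim⟩, hψeq.symm⟩
  · intro ψ hψ
    rw [changeLevel_apply_natCast hde ψ m hm, MulChar.star_apply, MulChar.star_apply,
      changeLevel_apply_natCast hde ψ n hn]

theorem sum_primitive_chars_orthogonality (q m n : ℕ) (hq : 1 < q)
    (hm : 0 < m) (hn : 0 < n) (hco : Nat.gcd (m * n) q = 1) :
    (∑ᶠ (χ : DirichletCharacter ℂ q) (_ : χ.IsPrimitive),
        χ (m : ZMod q) * (star χ) (n : ZMod q)) =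
      ∑ d ∈ q.divisors.filter (fun d : ℕ => (d : ℤ) ∣ ((m : ℤ) - (n : ℤ))),
        ((Nat.totient d * ArithmeticFunction.moebius (q / d) : ℤ) : ℂ) := by
  classical
  haveI : NeZero q := ⟨by omega⟩
  have hmq : Nat.Coprime m q := Nat.Coprime.coprime_dvd_left (dvd_mul_right m n) hco
  have hnq : Nat.Coprime n q := Nat.Coprime.coprime_dvd_left (dvd_mul_left n m) hco
  have hL : (∑ᶠ (χ : DirichletCharacter ℂ q) (_ : χ.IsPrimitive),
      χ (m : ZMod q) * (star χ) (n : ZMod q)) = Pprim m n q := by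
    rw [Pprim, ← finsum_eq_sum_of_fintype]
    refine finsum_congr fun χ => ?_
    rw [finsum_eq_if]
  set g : ℕ → ℂ := fun e => if (m : ZMod e) = (n : ZMod e) then (e.totient : ℂ) else 0 with hgdef
  have key : ∀ e > 0, e ∈ {e : ℕ | e ∣ q} → (∑ i ∈ e.divisors, Pprim m n i) = g e := by
    intro e he hes
    haveI : NeZero e := ⟨he.ne'⟩
    rw [← split_sum e m n (hmq.coprime_dvd_right hes) (hnq.coprime_dvd_right hes),
      sum_all_eq e m n (hmq.coprime_dvd_right hes) (hnq.coprime_dvd_right hes)]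
  have inv := (ArithmeticFunction.sum_eq_iff_sum_smul_moebius_eq_on {e : ℕ | e ∣ q}
    (fun a b hab hb => hab.trans hb)).mp key q (by omega) (dvd_refl q)
  rw [hL, ← inv]
  rw [Nat.sum_divisorsAntidiagonal' (f := fun i j => (ArithmeticFunction.moebius i) • g j)]
  rw [Finset.sum_filter]
  refine Finset.sum_congr rfl fun d hd => ?_
  have hcond : ((m : ZMod d) = (n : ZMod d)) ↔ ((d : ℤ) ∣ (m : ℤ) - n) := by
    rw [ZMod.natCast_eq_natCast_iff, Nat.modEq_iff_dvd]
    exact dvd_sub_comm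
  by_cases hdiv : (d : ℤ) ∣ (m : ℤ) - n
  · rw [if_pos hdiv, hgdef]
    simp only
    rw [if_pos (hcond.mpr hdiv), zsmul_eq_mul]
    push_cast
    ring
  · rw [if_neg hdiv, hgdef]
    simp only
    rw [if_neg (fun hc => hdiv (hcond.mp hc)), smul_zero]
end

section
/- Let c, d, r be positive integers with gcd(r, d) = 1 and gcd(c, d) = 1. Then the sum over integers a with 1 ≤ a ≤ cd, gcd(a, cd) = 1, and a ≡ r (mod d), of e(a/(cd)) equals μ(c)·e(r·c̄/d), where c̄ is an inverse of c modulo d and e(x) = exp(2πix). -/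
open Complex Real

/-- `e x = exp(2πix)` -/
noncomputable def eFun (x : ℝ) : ℂ := Complex.exp (2 * Real.pi * Complex.I * x)

lemma pow_congr_mod {ζ : ℂ} {n : ℕ} (h1 : ζ ^ n = 1) {a b : ℕ} (hab : a ≡ b [MOD n]) :
    ζ ^ a = ζ ^ b := by
  have key : ∀ m : ℕ, ζ ^ m = ζ ^ (m % n) := by
    intro m
    conv_lhs => rw [← Nat.mod_add_div m n]
    rw [pow_add, pow_mul, h1, one_pow, mul_one]
  rw [key a, key b]
  exact congrArg (fun k => ζ ^ k) hab

lemma eFun_nat_div (a n : ℕ) (hn : n ≠ 0) :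
    eFun ((a : ℝ) / (n : ℝ)) = Complex.exp (2 * Real.pi * Complex.I / (n : ℂ)) ^ a := by
  rw [← Complex.exp_nat_mul]
  unfold eFun
  congr 1
  have hn' : (n : ℂ) ≠ 0 := Nat.cast_ne_zero.mpr hn
  push_cast
  field_simp

lemma moebius_divisor_sum (m : ℕ) :
    ∑ e ∈ m.divisors, ((ArithmeticFunction.moebius e : ℤ) : ℂ) = if m = 1 then 1 else 0 := by
  have h := congrArg (fun f : ArithmeticFunction ℂ => f m)
    (ArithmeticFunction.coe_moebius_mul_coe_zeta (R := ℂ))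
  simp only [ArithmeticFunction.coe_mul_zeta_apply, ArithmeticFunction.one_apply] at h
  simpa using h

lemma ramanujan_range {c : ℕ} (hc : 0 < c) {ζ : ℂ} (hζ : IsPrimitiveRoot ζ c) :
    ∑ a ∈ (Finset.range c).filter (fun a => Nat.gcd a c = 1), ζ ^ a
      = ((ArithmeticFunction.moebius c : ℤ) : ℂ) := by
  have hζ1 : ζ ^ c = 1 := hζ.pow_eq_one
  have hdiv : ∀ a : ℕ, (Nat.gcd a c).divisors = c.divisors.filter (· ∣ a) := by
    intro a
    ext e
    simp only [Nat.mem_divisors, Finset.mem_filter, Nat.dvd_gcd_iff]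
    constructor
    · rintro ⟨⟨h1, h2⟩, h3⟩; exact ⟨⟨h2, hc.ne'⟩, h1⟩
    · rintro ⟨⟨h2, _⟩, h1⟩
      refine ⟨⟨h1, h2⟩, ?_⟩
      simp [Nat.gcd_eq_zero_iff, hc.ne']
  have hinner : ∀ e ∈ c.divisors,
      ∑ a ∈ (Finset.range c).filter (fun a => e ∣ a), ζ ^ a = if e = c then 1 else 0 := by
    intro e he
    obtain ⟨hedvd, hc0⟩ := Nat.mem_divisors.mp he
    have he0 : e ≠ 0 := by rintro rfl; exact hc0 (Nat.eq_zero_of_zero_dvd hedvd)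
    have hset : (Finset.range c).filter (fun a => e ∣ a)
        = (Finset.range (c / e)).image (fun b => e * b) := by
      ext a
      simp only [Finset.mem_filter, Finset.mem_range, Finset.mem_image]
      constructor
      · rintro ⟨ha, b, rfl⟩
        exact ⟨b, (Nat.lt_div_iff_mul_lt' hedvd b).mpr ha, rfl⟩
      · rintro ⟨b, hb, rfl⟩
        exact ⟨(Nat.lt_div_iff_mul_lt' hedvd b).mp hb, b, rfl⟩
    rw [hset, Finset.sum_image (by intro x _ y _ h; exact Nat.eq_of_mul_eq_mul_left (Nat.pos_of_ne_zero he0) h)]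
    simp_rw [pow_mul]
    by_cases hec : e = c
    · subst hec
      rw [Nat.div_self (Nat.pos_of_ne_zero he0)]
      simp [hζ1]
    · have helt : e < c := lt_of_le_of_ne (Nat.le_of_dvd hc hedvd) hec
      have hne1 : ζ ^ e ≠ 1 := hζ.pow_ne_one_of_pos_of_lt he0 helt
      rw [geom_sum_eq hne1, ← pow_mul, Nat.mul_div_cancel' hedvd, hζ1]
      simp [hec]
  calc ∑ a ∈ (Finset.range c).filter (fun a => Nat.gcd a c = 1), ζ ^ a
      = ∑ a ∈ Finset.range c,
          (∑ e ∈ c.divisors.filter (· ∣ a), ((ArithmeticFunction.moebius e : ℤ) : ℂ)) * ζ ^ a := by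
        rw [Finset.sum_filter]
        refine Finset.sum_congr rfl fun a _ => ?_
        rw [← hdiv a, moebius_divisor_sum]
        by_cases h : Nat.gcd a c = 1 <;> simp [h]
    _ = ∑ e ∈ c.divisors, ((ArithmeticFunction.moebius e : ℤ) : ℂ)
          * ∑ a ∈ (Finset.range c).filter (fun a => e ∣ a), ζ ^ a := by
        simp_rw [Finset.sum_filter, Finset.sum_mul, Finset.mul_sum]
        rw [Finset.sum_comm]
        refine Finset.sum_congr rfl fun a _ => Finset.sum_congr rfl fun e _ => ?_
        by_cases h : e ∣ a <;> simp [h]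
    _ = ((ArithmeticFunction.moebius c : ℤ) : ℂ) := by
        rw [Finset.sum_congr rfl fun e he => by rw [hinner e he]]
        simp_rw [mul_ite, mul_one, mul_zero]
        rw [Finset.sum_ite_eq' c.divisors c]
        simp [Nat.mem_divisors_self c hc.ne']

lemma ramanujan_units {c : ℕ} [NeZero c] (hc : 0 < c) {ζ : ℂ} (hζ : IsPrimitiveRoot ζ c) :
    ∑ y ∈ Finset.univ.filter (fun y : ZMod c => Nat.gcd y.val c = 1), ζ ^ y.val
      = ((ArithmeticFunction.moebius c : ℤ) : ℂ) := by
  rw [← ramanujan_range hc hζ]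
  refine Finset.sum_nbij' (fun y => ZMod.val y) (fun a => (a : ZMod c)) ?_ ?_ ?_ ?_ ?_
  · intro y hy
    rw [Finset.mem_filter] at hy ⊢
    exact ⟨Finset.mem_range.mpr (ZMod.val_lt y), hy.2⟩
  · intro a ha
    rw [Finset.mem_filter] at ha ⊢
    refine ⟨Finset.mem_univ _, ?_⟩
    rw [ZMod.val_cast_of_lt (Finset.mem_range.mp ha.1)]
    exact ha.2
  · intro y _
    exact ZMod.natCast_rightInverse y
  · intro a ha
    rw [Finset.mem_filter] at ha
    exact ZMod.val_cast_of_lt (Finset.mem_range.mp ha.1)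
  · intro y _
    rfl

theorem exp_sum_coprime_case (c d r cinv : ℕ) (hc : 0 < c) (hd : 0 < d) (hr : 0 < r)
    (hrd : Nat.gcd r d = 1) (hcd : Nat.gcd c d = 1)
    (hcinv : c * cinv ≡ 1 [MOD d]) :
    (∑ a ∈ (Finset.Icc 1 (c * d)).filter
        (fun a => Nat.gcd a (c * d) = 1 ∧ a ≡ r [MOD d]), eFun (a / (c * d))) =
      (ArithmeticFunction.moebius c : ℂ) * eFun ((r * cinv : ℕ) / d) := by
  haveI : NeZero c := ⟨hc.ne'⟩
  haveI : NeZero d := ⟨hd.ne'⟩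
  have hn0 : c * d ≠ 0 := by positivity
  have hval : ∀ a : ℕ, eFun ((a : ℝ) / ((c : ℝ) * (d : ℝ)))
      = Complex.exp (2 * Real.pi * Complex.I / ((c : ℂ) * (d : ℂ))) ^ a := by
    intro a
    have h := eFun_nat_div a (c * d) hn0
    push_cast at h
    exact h
  by_cases hone : c * d = 1
  · have hc1 : c = 1 := Nat.dvd_one.mp ⟨d, hone.symm⟩
    have hd1 : d = 1 := Nat.dvd_one.mp ⟨c, by rw [mul_comm]; exact hone.symm⟩
    subst hc1; subst hd1
    have hset : (Finset.Icc 1 (1 * 1)).filter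
        (fun a => Nat.gcd a (1 * 1) = 1 ∧ a ≡ r [MOD 1]) = {1} := by
      ext a
      simp [Nat.modEq_one]
    rw [hset, Finset.sum_singleton]
    have h1 : ∀ m : ℕ, eFun ((m : ℝ) / ((1:ℕ) : ℝ)) = 1 := by
      intro m
      rw [eFun_nat_div m 1 one_ne_zero]
      simp [Complex.exp_two_pi_mul_I]
    rw [h1 (r * cinv)]
    have harg : ((1:ℕ):ℝ) / (((1:ℕ):ℝ) * ((1:ℕ):ℝ)) = ((1:ℕ):ℝ) / ((1:ℕ):ℝ) := by norm_num
    rw [harg, h1 1]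
    simp
  -- main case: c * d > 1
  have hn1 : 1 < c * d := lt_of_le_of_ne (Nat.one_le_iff_ne_zero.mpr hn0) (Ne.symm hone)
  have hcC : (c : ℂ) ≠ 0 := Nat.cast_ne_zero.mpr hc.ne'
  have hdC : (d : ℂ) ≠ 0 := Nat.cast_ne_zero.mpr hd.ne'
  set ζ := Complex.exp (2 * Real.pi * Complex.I / ((c : ℂ) * (d : ℂ))) with hζdef
  set ζc := Complex.exp (2 * Real.pi * Complex.I / (c : ℂ)) with hζcdef
  set ζd := Complex.exp (2 * Real.pi * Complex.I / (d : ℂ)) with hζddef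
  have hζprim : IsPrimitiveRoot ζ (c * d) := by
    rw [hζdef]
    have h := Complex.isPrimitiveRoot_exp (c * d) hn0
    rwa [Nat.cast_mul] at h
  have hζ1 : ζ ^ (c * d) = 1 := hζprim.pow_eq_one
  have hζcprim : IsPrimitiveRoot ζc c := Complex.isPrimitiveRoot_exp c hc.ne'
  have hζc1 : ζc ^ c = 1 := hζcprim.pow_eq_one
  have hζd1 : ζd ^ d = 1 := (Complex.isPrimitiveRoot_exp d hd.ne').pow_eq_one
  have hzd : ζ ^ d = ζc := by
    rw [hζdef, hζcdef, ← Complex.exp_nat_mul]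
    congr 1
    field_simp
  have hzc : ζ ^ c = ζd := by
    rw [hζdef, hζddef, ← Complex.exp_nat_mul]
    congr 1
    field_simp
  set u' : ZMod c := (d : ZMod c)⁻¹ with hu'def
  have hdu' : (d : ZMod c) * u' = 1 := ZMod.coe_mul_inv_eq_one d (Nat.coprime_comm.mp hcd)
  set u : ℕ := u'.val with hudef
  have hu : ((u : ℕ) : ZMod c) = u' := ZMod.natCast_rightInverse u'
  have hdu : d * u ≡ 1 [MOD c] := by
    have h : ((d * u : ℕ) : ZMod c) = ((1 : ℕ) : ZMod c) := by
      push_cast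
      rw [hu, hdu']
    exact (ZMod.natCast_eq_natCast_iff _ _ _).mp h
  have hu'unit : IsUnit u' := IsUnit.of_mul_eq_one (d : ZMod c) (by rw [mul_comm]; exact hdu')
  have hdunit : IsUnit ((d : ZMod c)) := IsUnit.of_mul_eq_one u' hdu'
  have unit_iff : ∀ x : ZMod c, IsUnit x ↔ Nat.gcd x.val c = 1 := by
    intro x
    conv_lhs => rw [← ZMod.natCast_rightInverse x]
    exact ZMod.isUnit_iff_coprime x.val c
  have key : ∀ a : ℕ, Nat.gcd a (c * d) = 1 → a ≡ r [MOD d] →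
      eFun ((a : ℝ) / ((c : ℝ) * (d : ℝ)))
        = ζc ^ (((a : ZMod c) * u').val) * eFun (((r * cinv : ℕ) : ℝ) / (d : ℝ)) := by
    intro a hgcd hmod
    rw [hval a]
    have ht_c : d * u + c * cinv ≡ 1 [MOD c] := by
      have h0 : c * cinv ≡ 0 [MOD c] := Nat.modEq_zero_iff_dvd.mpr (dvd_mul_right c cinv)
      simpa using hdu.add h0
    have ht_d : d * u + c * cinv ≡ 1 [MOD d] := by
      have h0 : d * u ≡ 0 [MOD d] := Nat.modEq_zero_iff_dvd.mpr (dvd_mul_right d u)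
      simpa using h0.add hcinv
    have ht : d * u + c * cinv ≡ 1 [MOD c * d] :=
      (Nat.modEq_and_modEq_iff_modEq_mul hcd).mp ⟨ht_c, ht_d⟩
    have hat : a * (d * u + c * cinv) ≡ a [MOD c * d] := by simpa using ht.mul_left a
    rw [show ζ ^ a = ζ ^ (a * (d * u + c * cinv)) from (pow_congr_mod hζ1 hat).symm]
    rw [show a * (d * u + c * cinv) = d * (a * u) + c * (a * cinv) by ring]
    rw [pow_add, pow_mul ζ d (a * u), pow_mul ζ c (a * cinv), hzd, hzc]
    congr 1
    · refine pow_congr_mod hζc1 ?_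
      refine (ZMod.natCast_eq_natCast_iff _ _ _).mp ?_
      rw [ZMod.natCast_rightInverse ((a : ZMod c) * u')]
      push_cast
      rw [hu]
    · rw [show ζd ^ (a * cinv) = ζd ^ (r * cinv) from pow_congr_mod hζd1 (hmod.mul_right cinv)]
      exact (eFun_nat_div (r * cinv) d hd.ne').symm
  have hbij : (∑ a ∈ (Finset.Icc 1 (c * d)).filter
        (fun a => Nat.gcd a (c * d) = 1 ∧ a ≡ r [MOD d]), eFun ((a : ℝ) / ((c : ℝ) * (d : ℝ))))
      = ∑ y ∈ Finset.univ.filter (fun y : ZMod c => Nat.gcd y.val c = 1),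
          ζc ^ y.val * eFun (((r * cinv : ℕ) : ℝ) / (d : ℝ)) := by
    refine Finset.sum_nbij' (fun a => ((a : ZMod c) * u'))
      (fun y => (Nat.chineseRemainder hcd ((y * (d : ZMod c)).val) r : ℕ)) ?_ ?_ ?_ ?_ ?_
    · intro a ha
      rw [Finset.mem_filter] at ha
      refine Finset.mem_filter.mpr ⟨Finset.mem_univ _, ?_⟩
      rw [← unit_iff]
      exact ((ZMod.isUnit_iff_coprime a c).mpr
        (Nat.Coprime.coprime_dvd_right (dvd_mul_right c d) ha.2.1)).mul hu'unit
    · intro y hy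
      rw [Finset.mem_filter] at hy
      have hyu : IsUnit y := (unit_iff y).mpr hy.2
      obtain ⟨hk1, hk2⟩ := (Nat.chineseRemainder hcd ((y * (d : ZMod c)).val) r).2
      set k : ℕ := (Nat.chineseRemainder hcd ((y * (d : ZMod c)).val) r : ℕ) with hkdef
      have hkc : Nat.Coprime k c := by
        rw [← ZMod.isUnit_iff_coprime]
        have hcast : ((k : ℕ) : ZMod c) = y * (d : ZMod c) := by
          rw [(ZMod.natCast_eq_natCast_iff _ _ _).mpr hk1]
          exact ZMod.natCast_rightInverse _
        rw [hcast]
        exact hyu.mul hdunit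
      have hkd : Nat.Coprime k d := by
        rw [← ZMod.isUnit_iff_coprime]
        rw [(ZMod.natCast_eq_natCast_iff _ _ _).mpr hk2]
        exact (ZMod.isUnit_iff_coprime r d).mpr hrd
      have hkcd : Nat.gcd k (c * d) = 1 := Nat.Coprime.mul_right hkc hkd
      have hklt : k < c * d := Nat.chineseRemainder_lt_mul hcd _ r hc.ne' hd.ne'
      have hk0 : k ≠ 0 := by
        rintro h
        rw [h, Nat.gcd_zero_left] at hkcd
        exact hone hkcd
      exact Finset.mem_filter.mpr
        ⟨Finset.mem_Icc.mpr ⟨Nat.one_le_iff_ne_zero.mpr hk0, hklt.le⟩, hkcd, hk2⟩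
    · intro a ha
      rw [Finset.mem_filter, Finset.mem_Icc] at ha
      obtain ⟨⟨ha1, ha2⟩, hgcd, hmod⟩ := ha
      have halt : a < c * d := lt_of_le_of_ne ha2
        (by rintro rfl; rw [Nat.gcd_self] at hgcd; exact hone hgcd)
      have hs : ((a : ZMod c) * u' * (d : ZMod c)).val = a % c := by
        rw [mul_assoc, mul_comm u' _, hdu', mul_one, ZMod.val_natCast]
      obtain ⟨hk1, hk2⟩ := (Nat.chineseRemainder hcd (((a : ZMod c) * u' * (d : ZMod c)).val) r).2
      set k : ℕ := (Nat.chineseRemainder hcd (((a : ZMod c) * u' * (d : ZMod c)).val) r : ℕ)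
        with hkdef
      have hklt : k < c * d := Nat.chineseRemainder_lt_mul hcd _ r hc.ne' hd.ne'
      have hmodc : k ≡ a [MOD c] := hk1.trans (by rw [hs]; exact Nat.mod_modEq a c)
      have hmodd : k ≡ a [MOD d] := hk2.trans hmod.symm
      have hmcd : k ≡ a [MOD c * d] :=
        (Nat.modEq_and_modEq_iff_modEq_mul hcd).mp ⟨hmodc, hmodd⟩
      have heq : k % (c * d) = a % (c * d) := hmcd
      rwa [Nat.mod_eq_of_lt hklt, Nat.mod_eq_of_lt halt] at heq
    · intro y hy
      obtain ⟨hk1, hk2⟩ := (Nat.chineseRemainder hcd ((y * (d : ZMod c)).val) r).2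
      have hcast : ((Nat.chineseRemainder hcd ((y * (d : ZMod c)).val) r : ℕ) : ZMod c)
          = y * (d : ZMod c) := by
        rw [(ZMod.natCast_eq_natCast_iff _ _ _).mpr hk1]
        exact ZMod.natCast_rightInverse _
      show ((Nat.chineseRemainder hcd ((y * (d : ZMod c)).val) r : ℕ) : ZMod c) * u' = y
      rw [hcast, mul_assoc, hdu', mul_one]
    · intro a ha
      rw [Finset.mem_filter] at ha
      exact key a ha.2.1 ha.2.2
  rw [hbij, ← Finset.sum_mul, ramanujan_units hc hζcprim]
end

section
/- Let c, d, r be positive integers with gcd(r, d) = 1 and gcd(c, d) > 1. Then the sum over integers a with 1 ≤ a ≤ cd, gcd(a, cd) = 1, and a ≡ r (mod d), of e(a/(cd)) equals 0. -/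
open Complex Real

lemma eFun_add (x y : ℝ) : eFun (x + y) = eFun x * eFun y := by
  rw [eFun, eFun, eFun, ← Complex.exp_add]
  congr 1
  push_cast
  ring

lemma eFun_neg_one : eFun (-1) = 1 := by
  rw [eFun]
  have : (2 * (Real.pi:ℂ) * Complex.I * ((-1:ℝ):ℂ)) = (-1 : ℤ) * (2 * Real.pi * Complex.I) := by
    push_cast; ring
  rw [this, Complex.exp_int_mul_two_pi_mul_I]

lemma eFun_ne_one {x : ℝ} (h0 : 0 < x) (h1 : x < 1) : eFun x ≠ 1 := by
  intro h
  rw [eFun, Complex.exp_eq_one_iff] at h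
  obtain ⟨m, hm⟩ := h
  have h2 : (2 : ℂ) * Real.pi * Complex.I ≠ 0 := by
    simp [Complex.I_ne_zero, Real.pi_ne_zero]
  have hx : (x : ℂ) = (m : ℂ) := by
    have hm' : (2 * (Real.pi:ℂ) * Complex.I) * (x : ℂ) = (2 * (Real.pi:ℂ) * Complex.I) * (m : ℂ) := by
      rw [hm]; ring
    exact mul_left_cancel₀ h2 hm'
  have hxr : x = (m : ℝ) := by exact_mod_cast hx
  rw [hxr] at h0 h1
  have : (0:ℤ) < m := by exact_mod_cast h0
  have : m < 1 := by exact_mod_cast h1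
  omega

theorem exp_sum_noncoprime_case (c d r : ℕ) (hc : 0 < c) (hd : 0 < d) (hr : 0 < r)
    (hrd : Nat.gcd r d = 1) (hcd : 1 < Nat.gcd c d) :
    (∑ a ∈ (Finset.Icc 1 (c * d)).filter
        (fun a => Nat.gcd a (c * d) = 1 ∧ a ≡ r [MOD d]), eFun (a / (c * d))) = 0 := by
  set n := c * d with hn
  have hn0 : 0 < n := Nat.mul_pos hc hd
  have hg1 : Nat.gcd c d ≠ 1 := by omega
  set p := (Nat.gcd c d).minFac with hpdef
  have hp : p.Prime := Nat.minFac_prime hg1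
  have hpc : p ∣ c := (Nat.minFac_dvd _).trans (Nat.gcd_dvd_left c d)
  have hpd : p ∣ d := (Nat.minFac_dvd _).trans (Nat.gcd_dvd_right c d)
  have hpn : p ∣ n := hpc.mul_right d
  set k := n / p with hkdef
  have hk : p * k = n := Nat.mul_div_cancel' hpn
  have hp2 : 2 ≤ p := hp.two_le
  have hk0 : 0 < k := Nat.div_pos (Nat.le_of_dvd hn0 hpn) (by omega)
  have hkn : k < n := by
    rw [← hk]
    calc k = 1 * k := (one_mul k).symm
      _ < p * k := by
        have h2 := Nat.mul_le_mul_right k hp2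
        omega
  have hdk : d ∣ k := by
    obtain ⟨c', hc'⟩ := hpc
    have h1 : p * k = p * (c' * d) := by rw [hk, hn, hc']; ring
    have h2 : k = c' * d := Nat.eq_of_mul_eq_mul_left (by omega) h1
    exact ⟨c', by rw [h2]; ring⟩
  have hqk : ∀ q : ℕ, q.Prime → q ∣ n → q ∣ k := by
    intro q hq hqn
    by_cases hqp : q = p
    · subst hqp
      have h2 : p * p ∣ n := by
        rw [hn]; exact mul_dvd_mul hpc hpd
      rw [← hk] at h2
      exact (Nat.mul_dvd_mul_iff_left (by omega : 0 < p)).mp h2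
    · rw [← hk] at hqn
      rcases (hq.dvd_mul).mp hqn with h | h
      · exact absurd ((Nat.prime_dvd_prime_iff_eq hq hp).mp h) hqp
      · exact h
  -- the shift map
  set f : ℕ → ℕ := fun a => if a + k ≤ n then a + k else a + k - n with hf
  set f' : ℕ → ℕ := fun a => if k < a then a - k else a + n - k with hf'
  set s := (Finset.Icc 1 n).filter (fun a => Nat.gcd a n = 1 ∧ a ≡ r [MOD d]) with hs
  have hmem : ∀ a, a ∈ s ↔ (1 ≤ a ∧ a ≤ n) ∧ Nat.gcd a n = 1 ∧ a ≡ r [MOD d] := by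
    intro a
    simp [hs, Finset.mem_filter, Finset.mem_Icc, and_assoc]
  -- coprimality transfer
  have hcop : ∀ a m : ℕ, Nat.gcd a n = 1 → a + k = m ∨ m + n = a + k → Nat.gcd m n = 1 := by
    intro a m ha hm
    by_contra h
    have hq : (Nat.gcd m n).minFac.Prime := Nat.minFac_prime h
    set q := (Nat.gcd m n).minFac
    have hq1 : q ∣ m := (Nat.minFac_dvd _).trans (Nat.gcd_dvd_left _ _)
    have hq2 : q ∣ n := (Nat.minFac_dvd _).trans (Nat.gcd_dvd_right _ _)
    have hq3 : q ∣ k := hqk q hq hq2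
    have hq4 : q ∣ a + k := by
      rcases hm with h1 | h1
      · rw [h1]; exact hq1
      · rw [← h1]; exact dvd_add hq1 hq2
    have hq5 : q ∣ a := by
      have := Nat.dvd_sub hq4 hq3
      simpa using this
    have : q ∣ 1 := ha ▸ Nat.dvd_gcd hq5 hq2
    have := Nat.le_of_dvd one_pos this
    have := hq.two_le
    omega
  -- mod d transfer
  have hmod : ∀ a m : ℕ, a ≡ r [MOD d] → a + k = m ∨ m + n = a + k → m ≡ r [MOD d] := by
    intro a m ha hm
    have hk0' : k ≡ 0 [MOD d] := (Nat.modEq_zero_iff_dvd).mpr hdk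
    have hn0' : n ≡ 0 [MOD d] := (Nat.modEq_zero_iff_dvd).mpr ⟨c, by rw [hn]; ring⟩
    rcases hm with h1 | h1
    · calc m = a + k := h1.symm
        _ ≡ a + 0 [MOD d] := Nat.ModEq.add_left a hk0'
        _ = a := by ring
        _ ≡ r [MOD d] := ha
    · have h2 : m + n ≡ r + 0 [MOD d] := by
        rw [h1]
        calc a + k ≡ a + 0 [MOD d] := Nat.ModEq.add_left a hk0'
          _ = a := by ring
          _ ≡ r [MOD d] := ha
          _ = r + 0 := by ring
      have h3 : m + n ≡ r + n [MOD d] := h2.trans (Nat.ModEq.add_left r hn0'.symm)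
      exact Nat.ModEq.add_right_cancel' n h3
  have key : ∀ a ∈ s, f a ∈ s := by
    intro a ha
    rw [hmem] at ha ⊢
    obtain ⟨⟨ha1, ha2⟩, hag, har⟩ := ha
    have hcase : a + k = f a ∨ f a + n = a + k := by
      simp only [hf]
      split <;> omega
    refine ⟨?_, hcop a (f a) hag hcase, hmod a (f a) har hcase⟩
    simp only [hf]
    split <;> omega
  have key' : ∀ a ∈ s, f' a ∈ s := by
    intro a ha
    rw [hmem] at ha ⊢
    obtain ⟨⟨ha1, ha2⟩, hag, har⟩ := ha
    have hcase : f' a + k = a ∨ a + n = f' a + k := by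
      simp only [hf']
      split <;> omega
    have hcase2 : f' a + k = a ∨ a + n = f' a + k := hcase
    constructor
    · simp only [hf']
      constructor
      · split <;> omega
      · split <;> omega
    constructor
    · -- gcd (f' a) n = 1 : from a via subtracting k — use hcop in reverse direction
      by_contra h
      have hq : (Nat.gcd (f' a) n).minFac.Prime := Nat.minFac_prime h
      set q := (Nat.gcd (f' a) n).minFac
      have hq1 : q ∣ f' a := (Nat.minFac_dvd _).trans (Nat.gcd_dvd_left _ _)
      have hq2 : q ∣ n := (Nat.minFac_dvd _).trans (Nat.gcd_dvd_right _ _)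
      have hq3 : q ∣ k := hqk q hq hq2
      have hq5 : q ∣ a := by
        rcases hcase with h1 | h1
        · rw [← h1]; exact dvd_add hq1 hq3
        · have : q ∣ a + n := h1 ▸ dvd_add hq1 hq3
          have := Nat.dvd_sub this hq2
          simpa using this
      have : q ∣ 1 := hag ▸ Nat.dvd_gcd hq5 hq2
      have := Nat.le_of_dvd one_pos this
      have := hq.two_le
      omega
    · -- f' a ≡ r [MOD d]
      have hk0' : k ≡ 0 [MOD d] := (Nat.modEq_zero_iff_dvd).mpr hdk
      have hn0' : n ≡ 0 [MOD d] := (Nat.modEq_zero_iff_dvd).mpr ⟨c, by rw [hn]; ring⟩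
      rcases hcase with h1 | h1
      · have h2 : f' a + k ≡ r + 0 [MOD d] := by rw [h1]; simpa using har
        have h3 : f' a + k ≡ r + k [MOD d] := h2.trans (Nat.ModEq.add_left r hk0'.symm)
        exact Nat.ModEq.add_right_cancel' k h3
      · have h2 : f' a + k ≡ r + 0 [MOD d] := by
          have : f' a + k = a + n := h1.symm
          rw [this]
          calc a + n ≡ a + 0 [MOD d] := Nat.ModEq.add_left a hn0'
            _ = a := by ring
            _ ≡ r [MOD d] := har
            _ = r + 0 := by ring
        have h3 : f' a + k ≡ r + k [MOD d] := h2.trans (Nat.ModEq.add_left r hk0'.symm)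
        exact Nat.ModEq.add_right_cancel' k h3
  set ζ := eFun ((k : ℝ) / n) with hζ
  have hterm : ∀ a ∈ s, ζ * eFun ((a : ℝ) / n) = eFun ((f a : ℝ) / n) := by
    intro a ha
    rw [hmem] at ha
    obtain ⟨⟨ha1, ha2⟩, _, _⟩ := ha
    simp only [hf]
    split
    · next h =>
      push_cast
      rw [← eFun_add]
      congr 1
      field_simp
      ring
    · next h =>
      have hge : n ≤ a + k := by omega
      have hcast : ((a + k - n : ℕ) : ℝ) = (a : ℝ) + k - n := by
        push_cast [Nat.cast_sub hge]
        ring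
      rw [hcast]
      have hnr : (0:ℝ) < n := by exact_mod_cast hn0
      have : ((a : ℝ) + k - n) / n = (k : ℝ) / n + (a : ℝ) / n + (-1) := by
        field_simp
        ring
      rw [this, eFun_add, eFun_add, eFun_neg_one, mul_one]
  have hsum : ∑ a ∈ s, eFun ((a : ℝ) / n) = ζ * ∑ a ∈ s, eFun ((a : ℝ) / n) := by
    rw [Finset.mul_sum]
    symm
    apply Finset.sum_nbij' f f' key key'
    · intro a ha
      rw [hmem] at ha
      simp only [hf', hf]
      split <;> split <;> omega
    · intro a ha
      rw [hmem] at ha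
      simp only [hf', hf]
      split <;> split <;> omega
    · intro a ha
      exact hterm a ha
  have hζne : ζ ≠ 1 := by
    have hkr : (k : ℝ) / n = 1 / p := by
      have hnr : (n : ℝ) = p * k := by exact_mod_cast hk.symm
      have hpk : (0:ℝ) < (p:ℝ) := by exact_mod_cast (by omega : 0 < p)
      have hkk : (0:ℝ) < (k:ℝ) := by exact_mod_cast hk0
      rw [hnr]
      field_simp
    rw [hζ, hkr]
    apply eFun_ne_one
    · positivity
    · rw [div_lt_one (by exact_mod_cast (by omega : 0 < p))]
      exact_mod_cast hp2
  have heq : ∀ a : ℕ, ((a : ℝ) / ((c:ℝ) * (d:ℝ))) = (a : ℝ) / n := by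
    intro a
    rw [hn]
    push_cast
    ring_nf
  have : (1 - ζ) * ∑ a ∈ s, eFun ((a : ℝ) / n) = 0 := by
    linear_combination hsum
  have hS : ∑ a ∈ s, eFun ((a : ℝ) / n) = 0 := by
    rcases mul_eq_zero.mp this with h | h
    · exact absurd (by linear_combination -h : ζ = 1) hζne
    · exact h
  calc _ = ∑ a ∈ s, eFun ((a : ℝ) / n) := by
        apply Finset.sum_congr rfl
        intro a _
        rw [heq a]
    _ = 0 := hS
end

section
/- If q > 1, m and n are positive integers with gcd(mn, q) = 1, then the sum over primitive even Dirichlet characters χ mod q (those with χ(-1) = 1) of χ(m)·conj(χ)(n) equals (1/2)·[Σ_{d | q, d | m−n} φ(d)μ(q/d) + Σ_{d | q, d | m+n} φ(d)μ(q/d)]. -/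
open DirichletCharacter
open scoped Classical

lemma aux_factorsThrough_gcd (q : ℕ) [NeZero q] (χ : DirichletCharacter ℂ q) (d₁ d₂ : ℕ)
    (h₁ : χ.FactorsThrough d₁) (h₂ : χ.FactorsThrough d₂) :
    χ.FactorsThrough (Nat.gcd d₁ d₂) := by
  have hd₁ : d₁ ∣ q := h₁.dvd
  have hd₂ : d₂ ∣ q := h₂.dvd
  have hg : Nat.gcd d₁ d₂ ∣ q := (Nat.gcd_dvd_left d₁ d₂).trans hd₁
  rw [factorsThrough_iff_ker_unitsMap hg]
  rw [factorsThrough_iff_ker_unitsMap hd₁] at h₁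
  rw [factorsThrough_iff_ker_unitsMap hd₂] at h₂
  intro u hu
  set U : ℤ := ((u : ZMod q).val : ℤ) with hU
  have hUu : ((U : ZMod q)) = (u : ZMod q) := by
    simp [hU, ZMod.natCast_zmod_val]
  -- u ≡ 1 mod gcd
  have hu' : ((U : ZMod (Nat.gcd d₁ d₂))) = 1 := by
    have : (ZMod.unitsMap hg u : ZMod (Nat.gcd d₁ d₂)) = 1 := by
      rw [show ZMod.unitsMap hg u = 1 from hu]; rfl
    rw [ZMod.unitsMap_def, Units.coe_map] at this
    rw [← map_intCast (ZMod.castHom hg (ZMod (Nat.gcd d₁ d₂))) U, hUu]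
    exact this
  have hdvd1 : ((Nat.gcd d₁ d₂ : ℤ)) ∣ U - 1 := by
    rwa [← ZMod.intCast_zmod_eq_zero_iff_dvd, Int.cast_sub, Int.cast_one, sub_eq_zero]
  obtain ⟨t, ht⟩ := hdvd1
  set A : ℤ := Nat.gcdA d₁ d₂
  set B : ℤ := Nat.gcdB d₁ d₂
  have hbez : (Nat.gcd d₁ d₂ : ℤ) = d₁ * A + d₂ * B := Nat.gcd_eq_gcd_ab d₁ d₂
  set V : ℤ := 1 + (d₂ : ℤ) * (t * B) with hV
  have hUV : U - V = (d₁ : ℤ) * (t * A) := by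
    rw [hV]; linear_combination ht + t * hbez
  have hUq : IsCoprime U (q : ℤ) :=
    Nat.isCoprime_iff_coprime.mpr (ZMod.val_coe_unit_coprime u)
  have hUd₁ : IsCoprime U ((d₁ : ℤ)) :=
    hUq.of_isCoprime_of_dvd_right (Int.natCast_dvd_natCast.mpr hd₁)
  have cV1 : IsCoprime V ((d₁ : ℤ)) := by
    obtain ⟨x, y, hxy⟩ := hUd₁
    exact ⟨x, y + x * (t * A), by linear_combination hxy - x * hUV⟩
  have cV2 : IsCoprime V ((d₂ : ℤ)) := isCoprime_one_left.add_mul_left_left (t * B)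
  set L := Nat.lcm d₁ d₂ with hLdef
  have hL : L ∣ q := Nat.lcm_dvd hd₁ hd₂
  have cVL : IsCoprime V ((L : ℤ)) := by
    refine (cV1.mul_right cV2).of_isCoprime_of_dvd_right ?_
    exact_mod_cast Int.natCast_dvd_natCast.mpr (Nat.lcm_dvd_mul d₁ d₂)
  have hVunit : IsUnit ((V : ZMod L)) := by
    obtain ⟨x, y, hxy⟩ := cVL
    refine IsUnit.of_mul_eq_one (x : ZMod L) ?_
    have := congrArg (Int.cast : ℤ → ZMod L) hxy
    push_cast at this
    simpa [ZMod.natCast_self, mul_comm] using this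
  obtain ⟨v, hv⟩ := ZMod.unitsMap_surjective hL hVunit.unit
  have hvL : (v : ZMod q).cast = ((V : ZMod L)) := by
    have := congrArg (Units.val) hv
    rw [ZMod.unitsMap_def, Units.coe_map, IsUnit.unit_spec] at this
    simpa using this
  -- v mod d : equals V mod d for d ∣ L
  have hcast : ∀ (d : ℕ) (hd : d ∣ q) (hdL : d ∣ L),
      ZMod.castHom hd (ZMod d) (v : ZMod q) = ((V : ZMod d)) := by
    intro d hd hdL
    have h1 : ZMod.castHom hd (ZMod d) (v : ZMod q)
        = ZMod.castHom hdL (ZMod d) (ZMod.castHom hL (ZMod L) (v : ZMod q)) := by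
      rw [← RingHom.comp_apply, ZMod.castHom_comp]
    have h2 : ZMod.castHom hL (ZMod L) (v : ZMod q) = ((V : ZMod L)) := by
      rw [ZMod.castHom_apply]; exact hvL
    rw [h1, h2, map_intCast]
  -- u mod d₁ = v mod d₁
  have huv1 : ZMod.unitsMap hd₁ u = ZMod.unitsMap hd₁ v := by
    ext
    simp only [ZMod.unitsMap_def, Units.coe_map]
    show ZMod.castHom hd₁ (ZMod d₁) _ = ZMod.castHom hd₁ (ZMod d₁) _
    rw [hcast d₁ hd₁ (Nat.dvd_lcm_left _ _), ← hUu, map_intCast]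
    rw [ZMod.intCast_eq_intCast_iff, Int.modEq_iff_dvd]
    exact ⟨-(t * A), by linear_combination -hUV⟩
  have hv2 : χ.toUnitHom v = 1 := by
    refine h₂ ?_
    rw [MonoidHom.mem_ker]
    ext
    simp only [ZMod.unitsMap_def, Units.coe_map, Units.val_one]
    show ZMod.castHom hd₂ (ZMod d₂) _ = _
    rw [hcast d₂ hd₂ (Nat.dvd_lcm_right _ _)]
    have : ((V : ZMod d₂)) = ((1 : ℤ) : ZMod d₂) := by
      rw [ZMod.intCast_eq_intCast_iff, Int.modEq_iff_dvd]
      exact ⟨-(t * B), by push_cast [hV]; ring⟩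
    simpa using this
  have hw : χ.toUnitHom (u * v⁻¹) = 1 := by
    refine h₁ ?_
    rw [MonoidHom.mem_ker, map_mul, map_inv, huv1, mul_inv_cancel]
  rw [MonoidHom.mem_ker, show u = (u * v⁻¹) * v by group, map_mul, hw, hv2, mul_one]

lemma aux_moebius_div_sum (r : ℕ) : ∑ e ∈ r.divisors, ArithmeticFunction.moebius (r / e)
    = if r = 1 then 1 else 0 := by
  rw [Nat.sum_div_divisors]
  have := congrArg (fun f : ArithmeticFunction ℤ => f r) ArithmeticFunction.moebius_mul_coe_zeta
  simp only [ArithmeticFunction.coe_mul_zeta_apply, ArithmeticFunction.one_apply] at this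
  exact this

lemma aux_moebius_filter_sum (q c : ℕ) (hq : q ≠ 0) (hc : c ∣ q) :
    ∑ d ∈ q.divisors.filter (fun d => c ∣ d), ArithmeticFunction.moebius (q / d)
      = if c = q then 1 else 0 := by
  have hc0 : 0 < c := Nat.pos_of_ne_zero (by rintro rfl; exact hq (Nat.eq_zero_of_zero_dvd hc))
  have key : ∑ d ∈ q.divisors.filter (fun d => c ∣ d), ArithmeticFunction.moebius (q / d)
      = ∑ e ∈ (q / c).divisors, ArithmeticFunction.moebius ((q / c) / e) := by
    refine Finset.sum_nbij' (fun d => d / c) (fun e => c * e) ?_ ?_ ?_ ?_ ?_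
    · intro d hd
      simp only [Finset.mem_filter, Nat.mem_divisors] at hd
      obtain ⟨⟨hdq, _⟩, e, rfl⟩ := hd
      simp only [Nat.mul_div_cancel_left _ hc0, Nat.mem_divisors]
      refine ⟨(Nat.dvd_div_iff_mul_dvd hc).mpr hdq, ?_⟩
      exact Nat.div_ne_zero_iff.mpr ⟨hc0.ne', Nat.le_of_dvd (Nat.pos_of_ne_zero hq) hc⟩
    · intro e he
      simp only [Nat.mem_divisors] at he
      simp only [Finset.mem_filter, Nat.mem_divisors]
      exact ⟨⟨(Nat.dvd_div_iff_mul_dvd hc).mp he.1, hq⟩, Dvd.intro e rfl⟩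
    · intro d hd
      simp only [Finset.mem_filter] at hd
      exact Nat.mul_div_cancel' hd.2
    · intro e _
      exact Nat.mul_div_cancel_left _ hc0
    · intro d hd
      simp only [Finset.mem_filter, Nat.mem_divisors] at hd
      obtain ⟨_, e, rfl⟩ := hd
      simp only [Nat.mul_div_cancel_left _ hc0, Nat.div_div_eq_div_mul]
  rw [key, aux_moebius_div_sum]
  congr 1
  rw [eq_iff_iff]
  constructor
  · intro h
    obtain ⟨k, rfl⟩ := hc
    rw [Nat.mul_div_cancel_left _ hc0] at h
    simp [h]
  · rintro rfl; exact Nat.div_self hc0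

lemma aux_conductor_dvd_of_factorsThrough (q : ℕ) [NeZero q] (χ : DirichletCharacter ℂ q) (d : ℕ)
    (h : χ.FactorsThrough d) : χ.conductor ∣ d := by
  have hft := aux_factorsThrough_gcd q χ _ _ (factorsThrough_conductor χ) h
  have h1 : χ.conductor ≤ Nat.gcd χ.conductor d := Nat.sInf_le hft
  have h2 : Nat.gcd χ.conductor d ∣ χ.conductor := Nat.gcd_dvd_left _ _
  have h0 : χ.conductor ≠ 0 := conductor_ne_zero χ
  have h3 : Nat.gcd χ.conductor d = χ.conductor :=
    le_antisymm (Nat.le_of_dvd (Nat.pos_of_ne_zero h0) h2) h1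
  rw [← h3]; exact Nat.gcd_dvd_right _ _

lemma aux_factorsThrough_iff_conductor_dvd (q : ℕ) [NeZero q] (χ : DirichletCharacter ℂ q) (d : ℕ)
    (hd : d ∣ q) : χ.FactorsThrough d ↔ χ.conductor ∣ d := by
  refine ⟨aux_conductor_dvd_of_factorsThrough q χ d, fun hcd => ?_⟩
  refine ⟨hd, changeLevel hcd χ.primitiveCharacter, ?_⟩
  rw [← changeLevel_trans _ hcd hd]
  exact (factorsThrough_conductor χ).eq_changeLevel.trans (by congr 1)

lemma aux_sum_factorsThrough (q : ℕ) [NeZero q] (d : ℕ) (hd : d ∣ q) (u : (ZMod q)ˣ) :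
    ∑ χ ∈ Finset.univ.filter (fun χ : DirichletCharacter ℂ q => χ.FactorsThrough d),
      χ (u : ZMod q)
      = ∑ ψ : DirichletCharacter ℂ d, ψ (ZMod.cast (u : ZMod q)) := by
  refine (Finset.sum_bij (fun ψ _ => changeLevel hd ψ) ?_ ?_ ?_ ?_).symm
  · intro ψ _
    exact Finset.mem_filter.mpr ⟨Finset.mem_univ _, changeLevel_factorsThrough _ hd⟩
  · intro ψ₁ _ ψ₂ _ h
    exact changeLevel_injective hd h
  · intro χ hχ
    obtain ⟨_, ψ, hψ⟩ := (Finset.mem_filter.mp hχ).2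
    exact ⟨ψ, Finset.mem_univ _, hψ.symm⟩
  · intro ψ _
    exact (changeLevel_eq_cast_of_dvd ψ hd u).symm

lemma aux_sum_primitive (q : ℕ) [NeZero q] (u : (ZMod q)ˣ) :
    ∑ χ ∈ Finset.univ.filter (fun χ : DirichletCharacter ℂ q => χ.IsPrimitive), χ (u : ZMod q)
      = ∑ d ∈ q.divisors, ((ArithmeticFunction.moebius (q / d) : ℤ) : ℂ) *
          (if (ZMod.cast (u : ZMod q) : ZMod d) = 1 then (Nat.totient d : ℂ) else 0) := by
  rw [Finset.sum_filter]
  have step1 : ∀ χ : DirichletCharacter ℂ q,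
      (if χ.IsPrimitive then χ (u : ZMod q) else 0)
        = ∑ d ∈ q.divisors,
            (if χ.FactorsThrough d then ((ArithmeticFunction.moebius (q / d) : ℤ) : ℂ) else 0)
              * χ (u : ZMod q) := by
    intro χ
    rw [← Finset.sum_mul]
    have h2 : ∑ d ∈ q.divisors,
        (if χ.FactorsThrough d then ((ArithmeticFunction.moebius (q / d) : ℤ) : ℂ) else 0)
        = if χ.IsPrimitive then 1 else 0 := by
      have hcongr : ∀ d ∈ q.divisors,
          (if χ.FactorsThrough d then ((ArithmeticFunction.moebius (q / d) : ℤ) : ℂ) else 0)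
          = (if χ.conductor ∣ d then ((ArithmeticFunction.moebius (q / d) : ℤ) : ℂ) else 0) := by
        intro d hd
        simp only [aux_factorsThrough_iff_conductor_dvd q χ d (Nat.mem_divisors.mp hd).1]
      rw [Finset.sum_congr rfl hcongr, ← Finset.sum_filter]
      rw [show ∑ d ∈ q.divisors.filter (fun d => χ.conductor ∣ d),
            ((ArithmeticFunction.moebius (q / d) : ℤ) : ℂ)
          = ((∑ d ∈ q.divisors.filter (fun d => χ.conductor ∣ d),
              ArithmeticFunction.moebius (q / d) : ℤ) : ℂ) by push_cast; rfl]
      rw [aux_moebius_filter_sum q _ (NeZero.ne q) (conductor_dvd_level χ)]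
      simp only [isPrimitive_def]
      split_ifs <;> simp
    rw [h2]
    split_ifs <;> simp
  rw [Finset.sum_congr rfl (fun χ _ => step1 χ), Finset.sum_comm]
  refine Finset.sum_congr rfl (fun d hd => ?_)
  have hdq : d ∣ q := (Nat.mem_divisors.mp hd).1
  haveI : NeZero d := ⟨fun h => (NeZero.ne q) (Nat.eq_zero_of_zero_dvd (h ▸ hdq))⟩
  simp only [ite_mul, zero_mul]
  rw [← Finset.sum_filter, ← Finset.mul_sum, aux_sum_factorsThrough q d hdq u,
    DirichletCharacter.sum_characters_eq]

theorem sum_primitive_even_chars_orthogonality (q m n : ℕ) (hq : 1 < q)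
    (hm : 0 < m) (hn : 0 < n) (hco : Nat.gcd (m * n) q = 1) :
    (∑ᶠ (χ : DirichletCharacter ℂ q) (_ : χ.IsPrimitive ∧ χ.Even),
        χ (m : ZMod q) * (star χ) (n : ZMod q)) =
      (1 / 2 : ℂ) *
        ((∑ d ∈ q.divisors.filter (fun d : ℕ => (d : ℤ) ∣ ((m : ℤ) - (n : ℤ))),
            ((Nat.totient d * ArithmeticFunction.moebius (q / d) : ℤ) : ℂ)) +
          ∑ d ∈ q.divisors.filter (fun d : ℕ => (d : ℤ) ∣ ((m : ℤ) + (n : ℤ))),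
            ((Nat.totient d * ArithmeticFunction.moebius (q / d) : ℤ) : ℂ)) := by
  haveI : NeZero q := ⟨by omega⟩
  have hcop : Nat.Coprime (m * n) q := hco
  have hmq : IsUnit ((m : ZMod q)) := by
    rw [ZMod.isUnit_iff_coprime]
    exact Nat.Coprime.coprime_dvd_left (dvd_mul_right m n) hcop
  have hnq : IsUnit ((n : ZMod q)) := by
    rw [ZMod.isUnit_iff_coprime]
    exact Nat.Coprime.coprime_dvd_left (dvd_mul_left n m) hcop
  set u₀ : ZMod q := (m : ZMod q) * Ring.inverse ((n : ZMod q)) with hu₀def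
  have hu₀ : IsUnit u₀ := hmq.mul (isUnit_ringInverse.mpr hnq)
  -- convert finsum to finset sum
  rw [finsum_cond_eq_sum_of_cond_iff _
    (fun {χ} _ => by simp only [Finset.mem_filter, Finset.mem_univ, true_and] :
      ∀ {χ : DirichletCharacter ℂ q}, χ (m : ZMod q) * (star χ) (n : ZMod q) ≠ 0 →
        ((χ.IsPrimitive ∧ χ.Even) ↔ χ ∈ Finset.univ.filter
          (fun χ : DirichletCharacter ℂ q => χ.IsPrimitive ∧ χ.Even)))]
  -- rewrite the term
  have hterm : ∀ χ : DirichletCharacter ℂ q,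
      χ (m : ZMod q) * (star χ) (n : ZMod q) = χ u₀ := by
    intro χ
    rw [MulChar.star_eq_inv, MulChar.inv_apply, ← map_mul]
  rw [Finset.sum_congr rfl (fun χ _ => hterm χ)]
  have hone : ((-1 : ZMod q)) * (-1 : ZMod q) = 1 := by ring
  have hsplit : ∑ χ ∈ Finset.univ.filter
        (fun χ : DirichletCharacter ℂ q => χ.IsPrimitive ∧ χ.Even), χ u₀
      = (1/2 : ℂ) *
        ((∑ χ ∈ Finset.univ.filter (fun χ : DirichletCharacter ℂ q => χ.IsPrimitive), χ u₀)
         + ∑ χ ∈ Finset.univ.filter (fun χ : DirichletCharacter ℂ q => χ.IsPrimitive),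
             χ (-u₀)) := by
    rw [← Finset.filter_filter, Finset.sum_filter, ← Finset.sum_add_distrib, Finset.mul_sum]
    refine Finset.sum_congr rfl (fun χ _ => ?_)
    have h1 : χ (-u₀) = χ (-1) * χ u₀ := by rw [← map_mul, neg_one_mul]
    have hsq : χ (-1) * χ (-1) = 1 := by rw [← map_mul, hone, map_one]
    rcases mul_self_eq_one_iff.mp hsq with h | h
    · rw [if_pos (show χ.Even from h), h1, h]; ring
    · rw [if_neg, h1, h]
      · ring
      · intro he
        rw [show χ.Even = (χ (-1) = 1) from rfl, h] at he
        norm_num at he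
  rw [hsplit]
  have hneg : IsUnit (-u₀) := hu₀.neg
  have S1 := aux_sum_primitive q hu₀.unit
  rw [hu₀.unit_spec] at S1
  have S2 := aux_sum_primitive q hneg.unit
  rw [hneg.unit_spec] at S2
  rw [S1, S2]
  congr 1
  congr 1
  · rw [Finset.sum_filter]
    refine Finset.sum_congr rfl fun d hd => ?_
    have hdq : d ∣ q := (Nat.mem_divisors.mp hd).1
    haveI : NeZero d := ⟨fun h => (NeZero.ne q) (Nat.eq_zero_of_zero_dvd (h ▸ hdq))⟩
    have hnd : IsUnit ((n : ZMod d)) := by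
      rw [ZMod.isUnit_iff_coprime]
      exact (Nat.Coprime.coprime_dvd_left (dvd_mul_left n m) hcop).coprime_dvd_right hdq
    have hmn : ZMod.castHom hdq (ZMod d) u₀ * (n : ZMod d) = (m : ZMod d) := by
      rw [← map_natCast (ZMod.castHom hdq (ZMod d)) n, ← map_mul, hu₀def, mul_assoc,
        Ring.inverse_mul_cancel _ hnq, mul_one, map_natCast]
    have hiff : ((ZMod.cast u₀ : ZMod d) = 1) ↔ ((d : ℤ) ∣ (m : ℤ) - (n : ℤ)) := by
      rw [← ZMod.castHom_apply (h := hdq)]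
      constructor
      · intro h
        have h2 : (m : ZMod d) = (n : ZMod d) := by rw [← hmn, h, one_mul]
        rw [ZMod.natCast_eq_natCast_iff, Nat.modEq_iff_dvd] at h2
        exact dvd_sub_comm.mp h2
      · intro h
        have h2 : (m : ZMod d) = (n : ZMod d) := by
          rw [ZMod.natCast_eq_natCast_iff, Nat.modEq_iff_dvd]; exact dvd_sub_comm.mp h
        have h3 : ZMod.castHom hdq (ZMod d) u₀ * (n : ZMod d) = 1 * (n : ZMod d) := by
          rw [one_mul, hmn, h2]
        exact hnd.mul_right_cancel h3
    by_cases hc : (d : ℤ) ∣ (m : ℤ) - (n : ℤ)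
    · rw [if_pos hc, if_pos (hiff.mpr hc)]; push_cast; ring
    · rw [if_neg hc, if_neg (fun h => hc (hiff.mp h)), mul_zero]
  · rw [Finset.sum_filter]
    refine Finset.sum_congr rfl fun d hd => ?_
    have hdq : d ∣ q := (Nat.mem_divisors.mp hd).1
    haveI : NeZero d := ⟨fun h => (NeZero.ne q) (Nat.eq_zero_of_zero_dvd (h ▸ hdq))⟩
    have hnd : IsUnit ((n : ZMod d)) := by
      rw [ZMod.isUnit_iff_coprime]
      exact (Nat.Coprime.coprime_dvd_left (dvd_mul_left n m) hcop).coprime_dvd_right hdq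
    have hmn : ZMod.castHom hdq (ZMod d) u₀ * (n : ZMod d) = (m : ZMod d) := by
      rw [← map_natCast (ZMod.castHom hdq (ZMod d)) n, ← map_mul, hu₀def, mul_assoc,
        Ring.inverse_mul_cancel _ hnq, mul_one, map_natCast]
    have hmn' : ZMod.castHom hdq (ZMod d) (-u₀) * (n : ZMod d) = -((m : ZMod d)) := by
      rw [map_neg, neg_mul, hmn]
    have hiff : ((ZMod.cast (-u₀) : ZMod d) = 1) ↔ ((d : ℤ) ∣ (m : ℤ) + (n : ℤ)) := by
      rw [← ZMod.castHom_apply (h := hdq)]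
      have key : (-((m : ZMod d)) = (n : ZMod d)) ↔ ((d : ℤ) ∣ (m : ℤ) + (n : ℤ)) := by
        have : (-((m : ZMod d)) = (n : ZMod d)) ↔
            (((-(m : ℤ) : ℤ) : ZMod d) = (((n : ℤ) : ℤ) : ZMod d)) := by push_cast; rfl
        rw [this, ZMod.intCast_eq_intCast_iff, Int.modEq_iff_dvd,
          show (n : ℤ) - (-(m : ℤ)) = (m : ℤ) + (n : ℤ) by ring]
      constructor
      · intro h
        have h2 : -((m : ZMod d)) = (n : ZMod d) := by rw [← hmn', h, one_mul]
        exact key.mp h2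
      · intro h
        have h3 : ZMod.castHom hdq (ZMod d) (-u₀) * (n : ZMod d) = 1 * (n : ZMod d) := by
          rw [one_mul, hmn', key.mpr h]
        exact hnd.mul_right_cancel h3
    by_cases hc : (d : ℤ) ∣ (m : ℤ) + (n : ℤ)
    · rw [if_pos hc, if_pos (hiff.mpr hc)]; push_cast; ring
    · rw [if_neg hc, if_neg (fun h => hc (hiff.mp h)), mul_zero]
end
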